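/- Let C = {x ∈ ℝⁿ : ⟨a_p, x⟩ ≤ b_p, p = 1,…,r} be a polyhedral convex set (given by finitely many affine inequalities with a_p ∈ ℝⁿ, b_p ∈ ℝ), let x⁰ ∈ C and u ∈ ℝⁿ. Then T²(C; x⁰, u) = T(T(C; x⁰); u). -/
import Mathlib


open Filter Topology Set
open scoped InnerProductSpace

noncomputable section

/-- The (first-order) tangent cone `T(C; x⁰)`. -/
def tcone {n : ℕ} (C : Set (EuclideanSpace ℝ (Fin n)))
    (x0 : EuclideanSpace ℝ (Fin n)) : Set (EuclideanSpace ℝ (Fin n)) :=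
  {d | ∃ t : ℕ → ℝ, ∃ dk : ℕ → EuclideanSpace ℝ (Fin n),
    (∀ k, 0 < t k) ∧ Tendsto t atTop (𝓝 0) ∧ Tendsto dk atTop (𝓝 d) ∧
    ∀ k, x0 + t k • dk k ∈ C}

/-- The second-order tangent set `T²(C; x⁰, u)`. -/
def tcone2 {n : ℕ} (C : Set (EuclideanSpace ℝ (Fin n)))
    (x0 u : EuclideanSpace ℝ (Fin n)) : Set (EuclideanSpace ℝ (Fin n)) :=
  {v | ∃ t : ℕ → ℝ, ∃ vk : ℕ → EuclideanSpace ℝ (Fin n),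
    (∀ k, 0 < t k) ∧ Tendsto t atTop (𝓝 0) ∧ Tendsto vk atTop (𝓝 v) ∧
    ∀ k, x0 + t k • u + ((1 / 2) * (t k) ^ 2) • vk k ∈ C}

/-- If `d` is in the tangent cone of the polyhedron at `x0` and the `p`-th
constraint is active at `x0`, then `⟪a p, d⟫ ≤ 0`. -/
lemma aux_tcone_inner_nonpos {n r : ℕ} {a : Fin r → EuclideanSpace ℝ (Fin n)}
    {b : Fin r → ℝ} {C : Set (EuclideanSpace ℝ (Fin n))}
    (hC : C = {x | ∀ p : Fin r, ⟪a p, x⟫_ℝ ≤ b p})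
    {x0 d : EuclideanSpace ℝ (Fin n)} (hd : d ∈ tcone C x0)
    (p : Fin r) (hp : ⟪a p, x0⟫_ℝ = b p) : ⟪a p, d⟫_ℝ ≤ 0 := by
  obtain ⟨s, e, hs, hs0, he, hm⟩ := hd
  have key : ∀ m, ⟪a p, e m⟫_ℝ ≤ 0 := by
    intro m
    have := (hC ▸ hm m) p
    simp only [inner_add_right, real_inner_smul_right] at this
    nlinarith [hs m]
  have hcont : Tendsto (fun m => ⟪a p, e m⟫_ℝ) atTop (𝓝 ⟪a p, d⟫_ℝ) :=
    ((continuous_const.inner continuous_id).tendsto d).comp he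
  exact le_of_tendsto hcont (Eventually.of_forall key)

set_option maxHeartbeats 1000000 in
/-- For a polyhedral convex set `C`: `T²(C; x⁰, u) = T(T(C; x⁰); u)`. -/
theorem stmt_9 {n r : ℕ} (a : Fin r → EuclideanSpace ℝ (Fin n)) (b : Fin r → ℝ)
    (C : Set (EuclideanSpace ℝ (Fin n)))
    (hC : C = {x | ∀ p : Fin r, ⟪a p, x⟫_ℝ ≤ b p})
    (x0 : EuclideanSpace ℝ (Fin n)) (hx0 : x0 ∈ C)
    (u : EuclideanSpace ℝ (Fin n)) :
    tcone2 C x0 u = tcone (tcone C x0) u := by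
  ext v
  constructor
  · -- forward: only uses convexity of C (via the linear inequalities)
    rintro ⟨t, vk, ht, ht0, hvk, hmem⟩
    refine ⟨fun k => t k / 2, vk, fun k => half_pos (ht k), by simpa using ht0.div_const 2,
      hvk, fun k => ?_⟩
    -- show u + (t k / 2) • vk k ∈ tcone C x0
    set d := u + (t k / 2) • vk k with hd
    have hbig : x0 + t k • d ∈ C := by
      have : x0 + t k • d = x0 + t k • u + ((1 / 2) * (t k) ^ 2) • vk k := by
        rw [hd, smul_add, smul_smul, add_assoc]
        congr 2
        ring_nf
      rw [this]; exact hmem k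
    refine ⟨fun m => t k / (m + 2), fun _ => d, fun m => div_pos (ht k) (by positivity), ?_,
      tendsto_const_nhds, fun m => ?_⟩
    · have h1 : Tendsto (fun m : ℕ => (m : ℝ) + 2) atTop atTop :=
        tendsto_atTop_add_const_right _ _ tendsto_natCast_atTop_atTop
      simpa using h1.const_div_atTop (t k)
    · -- convexity step
      rw [hC]; intro p
      have hb : ⟪a p, x0 + t k • d⟫_ℝ ≤ b p := (hC ▸ hbig) p
      have hx : ⟪a p, x0⟫_ℝ ≤ b p := (hC ▸ hx0) p
      simp only [inner_add_right, real_inner_smul_right] at hb ⊢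
      have hτpos : (0:ℝ) < t k / (m + 2) := div_pos (ht k) (by positivity)
      have hτle : t k / (m + 2) ≤ t k := by
        rw [div_le_iff₀ (by positivity)]
        nlinarith [ht k, (Nat.cast_nonneg m : (0:ℝ) ≤ m)]
      rcases le_or_gt 0 ⟪a p, d⟫_ℝ with h | h
      · nlinarith
      · nlinarith
  · -- backward: uses polyhedrality
    rintro ⟨t, dk, ht, ht0, hdk, hmem⟩
    -- active constraints: ⟪a p, u⟫ ≤ 0, and ⟪a p, v⟫ ≤ 0 if ⟪a p, u⟫ = 0
    have hud : ∀ p, ⟪a p, x0⟫_ℝ = b p → ∀ k, ⟪a p, u⟫_ℝ + t k * ⟪a p, dk k⟫_ℝ ≤ 0 := by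
      intro p hp k
      have := aux_tcone_inner_nonpos hC (hmem k) p hp
      simp only [inner_add_right, real_inner_smul_right] at this
      exact this
    have hdktend : ∀ p, Tendsto (fun k => ⟪a p, dk k⟫_ℝ) atTop (𝓝 ⟪a p, v⟫_ℝ) :=
      fun p => ((continuous_const.inner continuous_id).tendsto v).comp hdk
    have hu : ∀ p, ⟪a p, x0⟫_ℝ = b p → ⟪a p, u⟫_ℝ ≤ 0 := by
      intro p hp
      have hlim : Tendsto (fun k => ⟪a p, u⟫_ℝ + t k * ⟪a p, dk k⟫_ℝ) atTop
          (𝓝 (⟪a p, u⟫_ℝ + 0 * ⟪a p, v⟫_ℝ)) :=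
        tendsto_const_nhds.add (ht0.mul (hdktend p))
      simpa using le_of_tendsto hlim (Eventually.of_forall (hud p hp))
    have hv : ∀ p, ⟪a p, x0⟫_ℝ = b p → ⟪a p, u⟫_ℝ = 0 → ⟪a p, v⟫_ℝ ≤ 0 := by
      intro p hp hpu
      refine le_of_tendsto (hdktend p) (Eventually.of_forall fun k => ?_)
      have := hud p hp k
      rw [hpu] at this
      nlinarith [ht k]
    -- eventual feasibility near 0⁺
    have hev : ∀ p : Fin r, ∀ᶠ s in 𝓝[>] (0:ℝ),
        ⟪a p, x0⟫_ℝ + s * ⟪a p, u⟫_ℝ + ((1 / 2) * s ^ 2) * ⟪a p, v⟫_ℝ ≤ b p := by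
      intro p
      rcases eq_or_lt_of_le ((hC ▸ hx0) p) with hp | hp
      · rcases eq_or_lt_of_le (hu p hp) with hpu | hpu
        · -- active, ⟪a p, u⟫ = 0, so ⟪a p, v⟫ ≤ 0
          have hb := hv p hp hpu
          filter_upwards with s
          rw [hp, hpu]
          nlinarith [sq_nonneg s, hb]
        · -- active, ⟪a p, u⟫ < 0
          have h1 : Tendsto (fun s : ℝ => ⟪a p, u⟫_ℝ + (s / 2) * ⟪a p, v⟫_ℝ)
              (𝓝[>] 0) (𝓝 (⟪a p, u⟫_ℝ + (0 / 2) * ⟪a p, v⟫_ℝ)) := by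
            apply Tendsto.mono_left _ nhdsWithin_le_nhds
            exact (Continuous.tendsto (by fun_prop) 0)
          have h2 : ∀ᶠ s in 𝓝[>] (0:ℝ),
              ⟪a p, u⟫_ℝ + (s / 2) * ⟪a p, v⟫_ℝ < 0 :=
            h1.eventually_lt_const (by simpa using hpu)
          filter_upwards [h2, self_mem_nhdsWithin] with s hs hs0
          have hs0' : (0:ℝ) < s := hs0
          rw [hp]
          nlinarith
      · -- inactive constraint
        have h1 : Tendsto (fun s : ℝ =>
            ⟪a p, x0⟫_ℝ + s * ⟪a p, u⟫_ℝ + ((1 / 2) * s ^ 2) * ⟪a p, v⟫_ℝ)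
            (𝓝[>] 0) (𝓝 (⟪a p, x0⟫_ℝ + 0 * ⟪a p, u⟫_ℝ + ((1 / 2) * 0 ^ 2) * ⟪a p, v⟫_ℝ)) := by
          apply Tendsto.mono_left _ nhdsWithin_le_nhds
          exact (Continuous.tendsto (by fun_prop) 0)
        have := h1.eventually_lt_const (by simpa using hp)
        filter_upwards [this] with s hs using hs.le
    have hevall : ∀ᶠ s in 𝓝[>] (0:ℝ), ∀ p : Fin r,
        ⟪a p, x0⟫_ℝ + s * ⟪a p, u⟫_ℝ + ((1 / 2) * s ^ 2) * ⟪a p, v⟫_ℝ ≤ b p :=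
      eventually_all.2 hev
    -- sequence 1/(k+1) tends to 0 within (0,∞)
    have hseq : Tendsto (fun k : ℕ => 1 / ((k : ℝ) + 1)) atTop (𝓝[>] (0:ℝ)) := by
      apply tendsto_nhdsWithin_of_tendsto_nhds_of_eventually_within
      · exact tendsto_one_div_add_atTop_nhds_zero_nat
      · filter_upwards with k
        exact mem_Ioi.2 (by positivity)
    obtain ⟨N, hN⟩ := eventually_atTop.1 (hseq.eventually hevall)
    set τ : ℕ → ℝ := fun k => 1 / (((k + N : ℕ) : ℝ) + 1) with hτ
    have hτpos : ∀ k, 0 < τ k := fun k => by rw [hτ]; positivity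
    have hτ0 : Tendsto τ atTop (𝓝 0) := by
      exact tendsto_one_div_add_atTop_nhds_zero_nat.comp (tendsto_add_atTop_nat N)
    have hmem2 : ∀ k, x0 + τ k • u + ((1 / 2) * (τ k) ^ 2) • ((fun _ => v) k) ∈ C := by
      intro k
      rw [hC]; intro p
      have := hN (k + N) (Nat.le_add_left N k) p
      simp only [inner_add_right, real_inner_smul_right]
      convert this using 2
    exact ⟨τ, fun _ => v, hτpos, hτ0, tendsto_const_nhds, hmem2⟩
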